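/- arXiv:1804.09045 — 3 statements merged into one kernel-verified Lean document; each statement's English description precedes it below -/
import Mathlib

section
/- In a repeated zero-sum matrix game M with value v, suppose both players use ε-Hannan-consistent algorithms (so that each player's average external regret satisfies limsup r(t) ≤ ε almost surely). Then almost surely v − ε ≤ liminf_{t→∞} g(t) ≤ limsup_{t→∞} g(t) ≤ v + ε, where g(t) is player 1's average realized payoff after t rounds. -/
open MeasureTheory Filter
open scoped BigOperators

/-- Expected payoff to player 1 in the matrix game `M` under mixed strategies `σ₁, σ₂`. -/
noncomputable def payoff {m n : ℕ} (M : Fin m → Fin n → ℝ)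
    (σ₁ : Fin m → ℝ) (σ₂ : Fin n → ℝ) : ℝ :=
  ∑ i, ∑ j, σ₁ i * M i j * σ₂ j

/-- The (minimax) value of the zero-sum matrix game `M`. -/
noncomputable def gameValue {m n : ℕ} (M : Fin m → Fin n → ℝ) : ℝ :=
  ⨅ σ₂ : stdSimplex ℝ (Fin n), ⨆ σ₁ : stdSimplex ℝ (Fin m), payoff M σ₁.1 σ₂.1

section Aux

variable {m n : ℕ} [NeZero m] [NeZero n] {M : Fin m → Fin n → ℝ}

instance aux_ne1 : Nonempty (stdSimplex ℝ (Fin m)) :=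
  ⟨⟨Pi.single 0 1, single_mem_stdSimplex ℝ 0⟩⟩

lemma aux_payoff_nonneg (hM : ∀ i j, M i j ∈ Set.Icc (0:ℝ) 1)
    {σ₁ : Fin m → ℝ} {σ₂ : Fin n → ℝ}
    (h1 : σ₁ ∈ stdSimplex ℝ (Fin m)) (h2 : σ₂ ∈ stdSimplex ℝ (Fin n)) :
    0 ≤ payoff M σ₁ σ₂ :=
  Finset.sum_nonneg fun i _ => Finset.sum_nonneg fun j _ =>
    mul_nonneg (mul_nonneg (h1.1 i) (hM i j).1) (h2.1 j)

lemma aux_payoff_le_one (hM : ∀ i j, M i j ∈ Set.Icc (0:ℝ) 1)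
    {σ₁ : Fin m → ℝ} {σ₂ : Fin n → ℝ}
    (h1 : σ₁ ∈ stdSimplex ℝ (Fin m)) (h2 : σ₂ ∈ stdSimplex ℝ (Fin n)) :
    payoff M σ₁ σ₂ ≤ 1 := by
  have : payoff M σ₁ σ₂ ≤ ∑ i, ∑ j, σ₁ i * σ₂ j := by
    refine Finset.sum_le_sum fun i _ => Finset.sum_le_sum fun j _ => ?_
    have : σ₁ i * M i j * σ₂ j ≤ σ₁ i * 1 * σ₂ j :=
      mul_le_mul_of_nonneg_right (mul_le_mul_of_nonneg_left (hM i j).2 (h1.1 i)) (h2.1 j)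
    simpa using this
  calc payoff M σ₁ σ₂ ≤ ∑ i, ∑ j, σ₁ i * σ₂ j := this
    _ = (∑ i, σ₁ i) * (∑ j, σ₂ j) := by rw [Finset.sum_mul_sum]
    _ = 1 := by rw [h1.2, h2.2, one_mul]

lemma aux_bddAbove (hM : ∀ i j, M i j ∈ Set.Icc (0:ℝ) 1)
    {σ₂ : Fin n → ℝ} (h2 : σ₂ ∈ stdSimplex ℝ (Fin n)) :
    BddAbove (Set.range fun σ₁ : stdSimplex ℝ (Fin m) => payoff M σ₁.1 σ₂) := by
  refine ⟨1, ?_⟩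
  rintro x ⟨σ₁, rfl⟩
  exact aux_payoff_le_one hM σ₁.2 h2

lemma aux_sup_le (hM : ∀ i j, M i j ∈ Set.Icc (0:ℝ) 1)
    {σ₂ : Fin n → ℝ} (h2 : σ₂ ∈ stdSimplex ℝ (Fin n)) :
    gameValue M ≤ ⨆ i, ∑ j, M i j * σ₂ j := by
  have hbdd : BddBelow (Set.range fun σ₂ : stdSimplex ℝ (Fin n) =>
      ⨆ σ₁ : stdSimplex ℝ (Fin m), payoff M σ₁.1 σ₂.1) := by
    refine ⟨0, ?_⟩
    rintro x ⟨τ, rfl⟩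
    obtain ⟨σ₁⟩ := (inferInstance : Nonempty (stdSimplex ℝ (Fin m)))
    exact le_trans (aux_payoff_nonneg hM σ₁.2 τ.2)
      (le_ciSup (aux_bddAbove hM τ.2) σ₁)
  refine le_trans (ciInf_le hbdd ⟨σ₂, h2⟩) ?_
  refine ciSup_le fun σ₁ => ?_
  have hfin : BddAbove (Set.range fun i : Fin m => ∑ j, M i j * σ₂ j) :=
    (Set.finite_range _).bddAbove
  have key : payoff M σ₁.1 σ₂ ≤ ∑ i, σ₁.1 i * (⨆ i, ∑ j, M i j * σ₂ j) := by
    unfold payoff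
    refine Finset.sum_le_sum fun i _ => ?_
    have h1 : (∑ j, σ₁.1 i * M i j * σ₂ j) = σ₁.1 i * ∑ j, M i j * σ₂ j := by
      rw [Finset.mul_sum]; congr 1; ext j; ring
    rw [h1]
    exact mul_le_mul_of_nonneg_left (le_ciSup hfin i) (σ₁.2.1 i)
  calc payoff M σ₁.1 σ₂ ≤ ∑ i, σ₁.1 i * (⨆ i, ∑ j, M i j * σ₂ j) := key
    _ = (∑ i, σ₁.1 i) * (⨆ i, ∑ j, M i j * σ₂ j) := by rw [← Finset.sum_mul]
    _ = ⨆ i, ∑ j, M i j * σ₂ j := by rw [σ₁.2.2, one_mul]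

lemma aux_exists_col (hM : ∀ i j, M i j ∈ Set.Icc (0:ℝ) 1)
    {σ₁ : Fin m → ℝ} (h1 : σ₁ ∈ stdSimplex ℝ (Fin m)) :
    ∃ j, ∑ i, σ₁ i * M i j ≤ gameValue M := by
  obtain ⟨j₀, hj₀⟩ := Finite.exists_min (fun j : Fin n => ∑ i, σ₁ i * M i j)
  refine ⟨j₀, ?_⟩
  refine le_ciInf fun τ => ?_
  have hpay : (∑ i, σ₁ i * M i j₀) ≤ payoff M σ₁ τ.1 := by
    have : payoff M σ₁ τ.1 = ∑ j, (∑ i, σ₁ i * M i j) * τ.1 j := by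
      unfold payoff
      rw [Finset.sum_comm]
      congr 1; ext j; rw [Finset.sum_mul]
    rw [this]
    calc (∑ i, σ₁ i * M i j₀) = ∑ j, (∑ i, σ₁ i * M i j₀) * τ.1 j := by
          rw [← Finset.mul_sum, τ.2.2, mul_one]
      _ ≤ ∑ j, (∑ i, σ₁ i * M i j) * τ.1 j :=
          Finset.sum_le_sum fun j _ => mul_le_mul_of_nonneg_right (hj₀ j) (τ.2.1 j)
  exact le_trans hpay (le_ciSup (aux_bddAbove hM τ.2) ⟨σ₁, h1⟩)

end Aux

/-- If both players of the repeated zero-sum matrix game `M` (with value `v`) are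
ε-Hannan consistent, then almost surely
`v - ε ≤ liminf g(t) ≤ limsup g(t) ≤ v + ε`,
where `g(t)` is player 1's average realized payoff. -/
theorem stmt1 {m n : ℕ} [NeZero m] [NeZero n]
    {Ω : Type*} [MeasurableSpace Ω] (P : Measure Ω) [IsProbabilityMeasure P]
    (M : Fin m → Fin n → ℝ) (hM : ∀ i j, M i j ∈ Set.Icc (0:ℝ) 1)
    (I : Ω → ℕ → Fin m) (J : Ω → ℕ → Fin n) (ε : ℝ) (hε : 0 ≤ ε)
    (hHC1 : ∀ᵐ ω ∂P, limsup (fun t : ℕ =>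
        ((⨆ i, ∑ s ∈ Finset.range t, M i (J ω s)) -
          ∑ s ∈ Finset.range t, M (I ω s) (J ω s)) / (t : ℝ)) atTop ≤ ε)
    (hHC2 : ∀ᵐ ω ∂P, limsup (fun t : ℕ =>
        ((⨆ j, ∑ s ∈ Finset.range t, (1 - M (I ω s) j)) -
          ∑ s ∈ Finset.range t, (1 - M (I ω s) (J ω s))) / (t : ℝ)) atTop ≤ ε) :
    ∀ᵐ ω ∂P,
      gameValue M - ε ≤ liminf (fun t : ℕ =>
          (∑ s ∈ Finset.range t, M (I ω s) (J ω s)) / (t : ℝ)) atTop ∧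
      limsup (fun t : ℕ =>
          (∑ s ∈ Finset.range t, M (I ω s) (J ω s)) / (t : ℝ)) atTop ≤ gameValue M + ε := by
  filter_upwards [hHC1, hHC2] with ω h1 h2
  set v := gameValue M with hv
  set g : ℕ → ℝ := fun t => (∑ s ∈ Finset.range t, M (I ω s) (J ω s)) / (t : ℝ) with hg
  set r₁ : ℕ → ℝ := fun t =>
      ((⨆ i, ∑ s ∈ Finset.range t, M i (J ω s)) -
        ∑ s ∈ Finset.range t, M (I ω s) (J ω s)) / (t : ℝ) with hr₁
  set r₂ : ℕ → ℝ := fun t =>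
      ((⨆ j, ∑ s ∈ Finset.range t, (1 - M (I ω s) j)) -
        ∑ s ∈ Finset.range t, (1 - M (I ω s) (J ω s))) / (t : ℝ) with hr₂
  -- basic sum bounds
  have hGnn : ∀ t : ℕ, 0 ≤ ∑ s ∈ Finset.range t, M (I ω s) (J ω s) :=
    fun t => Finset.sum_nonneg fun s _ => (hM _ _).1
  have hGle : ∀ t : ℕ, (∑ s ∈ Finset.range t, M (I ω s) (J ω s)) ≤ t := by
    intro t
    calc (∑ s ∈ Finset.range t, M (I ω s) (J ω s)) ≤ ∑ s ∈ Finset.range t, (1:ℝ) :=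
        Finset.sum_le_sum fun s _ => (hM _ _).2
      _ = t := by simp
  -- g is bounded in [0,1]
  have hg0 : ∀ t, 0 ≤ g t := fun t => div_nonneg (hGnn t) (Nat.cast_nonneg t)
  have hg1 : ∀ t, g t ≤ 1 := by
    intro t
    rcases Nat.eq_zero_or_pos t with rfl | ht
    · simp [hg]
    · exact div_le_one_of_le₀ (hGle t) (Nat.cast_nonneg t)
  -- key inequality 1 : for t ≥ 1, v ≤ g t + r₁ t
  have key1 : ∀ t : ℕ, 1 ≤ t → v ≤ g t + r₁ t := by
    intro t ht
    have htpos : (0:ℝ) < t := by exact_mod_cast ht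
    -- empirical distribution of player 2
    set σ₂ : Fin n → ℝ := fun j =>
      (∑ s ∈ Finset.range t, if J ω s = j then (1:ℝ) else 0) / t with hσ₂
    have hmem : σ₂ ∈ stdSimplex ℝ (Fin n) := by
      constructor
      · intro j
        exact div_nonneg (Finset.sum_nonneg fun s _ => by positivity) htpos.le
      · rw [hσ₂]
        simp only
        rw [← Finset.sum_div]
        rw [Finset.sum_comm]
        simp [Finset.sum_ite_eq, htpos.ne']
    have hrow : ∀ i, (∑ j, M i j * σ₂ j) = (∑ s ∈ Finset.range t, M i (J ω s)) / t := by
      intro i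
      rw [hσ₂]
      simp only [← mul_div_assoc]
      rw [← Finset.sum_div]
      congr 1
      simp only [Finset.mul_sum]
      rw [Finset.sum_comm]
      refine Finset.sum_congr rfl fun s _ => ?_
      simp [mul_ite, mul_one, mul_zero, Finset.sum_ite_eq]
    have hA : v ≤ ⨆ i, (∑ s ∈ Finset.range t, M i (J ω s)) / t := by
      have := aux_sup_le hM hmem (M := M)
      calc v ≤ ⨆ i, ∑ j, M i j * σ₂ j := this
        _ = ⨆ i, (∑ s ∈ Finset.range t, M i (J ω s)) / t := by
            congr 1; ext i; exact hrow i
    -- sup/div commute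
    obtain ⟨i₀, hi₀⟩ := Finite.exists_max (fun i : Fin m => ∑ s ∈ Finset.range t, M i (J ω s))
    have hsup1 : (⨆ i, (∑ s ∈ Finset.range t, M i (J ω s)) / t)
        = (∑ s ∈ Finset.range t, M i₀ (J ω s)) / t := by
      refine le_antisymm (ciSup_le fun i =>
          ((div_le_div_iff_of_pos_right htpos).mpr (hi₀ i)))
        (le_ciSup (f := fun i : Fin m => (∑ s ∈ Finset.range t, M i (J ω s)) / (t:ℝ))
          ((Set.finite_range _).bddAbove) i₀)
    have hsup2 : (⨆ i, ∑ s ∈ Finset.range t, M i (J ω s))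
        = ∑ s ∈ Finset.range t, M i₀ (J ω s) := by
      refine le_antisymm (ciSup_le fun i => hi₀ i)
        (le_ciSup (f := fun i : Fin m => ∑ s ∈ Finset.range t, M i (J ω s))
          ((Set.finite_range _).bddAbove) i₀)
    have : v ≤ (⨆ i, ∑ s ∈ Finset.range t, M i (J ω s)) / t := by
      rw [hsup2, ← hsup1]; exact hA
    have expand : g t + r₁ t = (⨆ i, ∑ s ∈ Finset.range t, M i (J ω s)) / t := by
      rw [hg, hr₁]
      field_simp
      ring
    linarith [this, expand]
  -- key inequality 2 : for t ≥ 1, g t ≤ v + r₂ t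
  have key2 : ∀ t : ℕ, 1 ≤ t → g t ≤ v + r₂ t := by
    intro t ht
    have htpos : (0:ℝ) < t := by exact_mod_cast ht
    set σ₁ : Fin m → ℝ := fun i =>
      (∑ s ∈ Finset.range t, if I ω s = i then (1:ℝ) else 0) / t with hσ₁
    have hmem : σ₁ ∈ stdSimplex ℝ (Fin m) := by
      constructor
      · intro i
        exact div_nonneg (Finset.sum_nonneg fun s _ => by positivity) htpos.le
      · rw [hσ₁]
        simp only
        rw [← Finset.sum_div]
        rw [Finset.sum_comm]
        simp [Finset.sum_ite_eq, htpos.ne']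
    have hcol : ∀ j, (∑ i, σ₁ i * M i j) = (∑ s ∈ Finset.range t, M (I ω s) j) / t := by
      intro j
      rw [hσ₁]
      simp only [div_mul_eq_mul_div]
      rw [← Finset.sum_div]
      congr 1
      simp only [Finset.sum_mul]
      rw [Finset.sum_comm]
      refine Finset.sum_congr rfl fun s _ => ?_
      simp [ite_mul, one_mul, zero_mul, Finset.sum_ite_eq]
    obtain ⟨j₀, hj₀⟩ := aux_exists_col hM hmem
    rw [hcol j₀] at hj₀
    -- so ∑_s M (I s) j₀ ≤ t * v
    have hjv : (∑ s ∈ Finset.range t, M (I ω s) j₀) ≤ t * v := by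
      rw [div_le_iff₀ htpos] at hj₀; linarith
    -- the sup in r₂ is at least the value at j₀
    have hsup : (∑ s ∈ Finset.range t, (1 - M (I ω s) j₀))
        ≤ ⨆ j, ∑ s ∈ Finset.range t, (1 - M (I ω s) j) :=
      le_ciSup (f := fun j : Fin n => ∑ s ∈ Finset.range t, (1 - M (I ω s) j))
        ((Set.finite_range _).bddAbove) j₀
    have hsum1 : (∑ s ∈ Finset.range t, (1 - M (I ω s) j₀))
        = t - ∑ s ∈ Finset.range t, M (I ω s) j₀ := by
      rw [Finset.sum_sub_distrib]; simp
    have hsum2 : (∑ s ∈ Finset.range t, (1 - M (I ω s) (J ω s)))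
        = t - ∑ s ∈ Finset.range t, M (I ω s) (J ω s) := by
      rw [Finset.sum_sub_distrib]; simp
    have hr2 : (g t - v) * t ≤ r₂ t * t := by
      rw [hr₂]
      simp only
      rw [div_mul_cancel₀ _ htpos.ne']
      rw [hsum2, hg]
      have : (∑ s ∈ Finset.range t, M (I ω s) (J ω s)) / t * t
          = ∑ s ∈ Finset.range t, M (I ω s) (J ω s) := div_mul_cancel₀ _ htpos.ne'
      rw [sub_mul, this]
      have e1 : (t:ℝ) - t * v ≤ ⨆ j, ∑ s ∈ Finset.range t, (1 - M (I ω s) j) := by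
        calc (t:ℝ) - t * v ≤ t - ∑ s ∈ Finset.range t, M (I ω s) j₀ := by linarith
          _ = ∑ s ∈ Finset.range t, (1 - M (I ω s) j₀) := hsum1.symm
          _ ≤ _ := hsup
      linarith
    have := (mul_le_mul_iff_of_pos_right htpos).mp hr2
    linarith
  -- boundedness facts for r₁, r₂ (above)
  have hr₁bd : ∀ t, r₁ t ≤ 1 := by
    intro t
    rcases Nat.eq_zero_or_pos t with rfl | ht
    · simp [hr₁]
    · have htpos : (0:ℝ) < t := by exact_mod_cast ht
      rw [hr₁]
      refine div_le_one_of_le₀ ?_ htpos.le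
      have : (⨆ i, ∑ s ∈ Finset.range t, M i (J ω s)) ≤ t := by
        refine ciSup_le fun i => ?_
        calc (∑ s ∈ Finset.range t, M i (J ω s)) ≤ ∑ s ∈ Finset.range t, (1:ℝ) :=
            Finset.sum_le_sum fun s _ => (hM _ _).2
          _ = t := by simp
      linarith [hGnn t]
  have hr₂bd : ∀ t, r₂ t ≤ 1 := by
    intro t
    rcases Nat.eq_zero_or_pos t with rfl | ht
    · simp [hr₂]
    · have htpos : (0:ℝ) < t := by exact_mod_cast ht
      rw [hr₂]
      refine div_le_one_of_le₀ ?_ htpos.le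
      have h1' : (⨆ j, ∑ s ∈ Finset.range t, (1 - M (I ω s) j)) ≤ t := by
        refine ciSup_le fun j => ?_
        calc (∑ s ∈ Finset.range t, (1 - M (I ω s) j)) ≤ ∑ s ∈ Finset.range t, (1:ℝ) :=
            Finset.sum_le_sum fun s _ => by linarith [(hM (I ω s) j).1]
          _ = t := by simp
      have h2' : (0:ℝ) ≤ ∑ s ∈ Finset.range t, (1 - M (I ω s) (J ω s)) :=
        Finset.sum_nonneg fun s _ => by linarith [(hM (I ω s) (J ω s)).2]
      linarith
  have hbd1 : IsBoundedUnder (· ≤ ·) atTop r₁ := isBoundedUnder_of ⟨1, hr₁bd⟩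
  have hbd2 : IsBoundedUnder (· ≤ ·) atTop r₂ := isBoundedUnder_of ⟨1, hr₂bd⟩
  have hgcob_le : IsCoboundedUnder (· ≤ ·) atTop g :=
    IsBoundedUnder.isCoboundedUnder_le (isBoundedUnder_of ⟨0, fun t => hg0 t⟩)
  have hgcob_ge : IsCoboundedUnder (· ≥ ·) atTop g :=
    IsBoundedUnder.isCoboundedUnder_ge (isBoundedUnder_of ⟨1, fun t => hg1 t⟩)
  constructor
  · -- liminf bound
    refine le_of_forall_pos_le_add fun δ hδ => ?_
    have hlt : limsup r₁ atTop < ε + δ := lt_of_le_of_lt h1 (by linarith)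
    have hev : ∀ᶠ t in atTop, r₁ t < ε + δ := eventually_lt_of_limsup_lt hlt hbd1
    have hev2 : ∀ᶠ t in atTop, v - (ε + δ) ≤ g t := by
      filter_upwards [hev, Filter.eventually_ge_atTop 1] with t hrt ht
      have := key1 t ht
      linarith
    have := le_liminf_of_le hgcob_ge hev2
    linarith
  · -- limsup bound
    refine le_of_forall_pos_le_add fun δ hδ => ?_
    have hlt : limsup r₂ atTop < ε + δ := lt_of_le_of_lt h2 (by linarith)
    have hev : ∀ᶠ t in atTop, r₂ t < ε + δ := eventually_lt_of_limsup_lt hlt hbd2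
    have hev2 : ∀ᶠ t in atTop, g t ≤ v + (ε + δ) := by
      filter_upwards [hev, Filter.eventually_ge_atTop 1] with t hrt ht
      have := key2 t ht
      linarith
    have := limsup_le_of_le hgcob_le hev2
    linarith
end

section
/- In a repeated zero-sum matrix game M with value v played by two ε-Hannan-consistent players, almost surely v − 2ε ≤ liminf_{t→∞} u₁(σ̂₁(t), br) and limsup_{t→∞} u₁(br, σ̂₂(t)) ≤ v + 2ε, where σ̂_p(t) denotes the empirical frequency strategy of player p after t rounds. -/
open MeasureTheory Filter
open scoped BigOperators

set_option linter.unusedSectionVars false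
set_option linter.unusedVariables false
set_option linter.deprecated false
set_option maxHeartbeats 1000000

set_option maxHeartbeats 1000000

section helpers
variable {k : ℕ} [NeZero k]

lemma le_ciSup_fin (f : Fin k → ℝ) (i : Fin k) : f i ≤ ⨆ i, f i :=
  le_ciSup (Set.finite_range f).bddAbove i

lemma ciInf_fin_le (f : Fin k → ℝ) (i : Fin k) : ⨅ i, f i ≤ f i :=
  ciInf_le (Set.finite_range f).bddBelow i

lemma ciSup_div_fin (f : Fin k → ℝ) {c : ℝ} (hc : 0 < c) :
    ⨆ i, f i / c = (⨆ i, f i) / c := by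
  obtain ⟨i₀, hi₀⟩ := Finite.exists_max f
  have hmax : (⨆ i, f i) = f i₀ := le_antisymm (ciSup_le hi₀) (le_ciSup_fin f i₀)
  rw [hmax]
  refine le_antisymm (ciSup_le fun i => by gcongr; exact hi₀ i) (le_ciSup_fin (fun i => f i / c) i₀)

lemma ciInf_div_fin (f : Fin k → ℝ) {c : ℝ} (hc : 0 < c) :
    ⨅ i, f i / c = (⨅ i, f i) / c := by
  obtain ⟨i₀, hi₀⟩ := Finite.exists_min f
  have hmin : (⨅ i, f i) = f i₀ := le_antisymm (ciInf_fin_le f i₀) (le_ciInf hi₀)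
  rw [hmin]
  refine le_antisymm (ciInf_fin_le (fun i => f i / c) i₀) (le_ciInf fun i => by gcongr; exact hi₀ i)

lemma ciSup_const_sub_fin (f : Fin k → ℝ) (c : ℝ) :
    ⨆ i, (c - f i) = c - ⨅ i, f i := by
  obtain ⟨i₀, hi₀⟩ := Finite.exists_min f
  have hmin : (⨅ i, f i) = f i₀ := le_antisymm (ciInf_fin_le f i₀) (le_ciInf hi₀)
  rw [hmin]
  refine le_antisymm (ciSup_le fun i => by gcongr; exact hi₀ i) (le_ciSup_fin (fun i => c - f i) i₀)

lemma sum_comp_eq (t : ℕ) (g : ℕ → Fin k) (f : Fin k → ℝ) :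
    ∑ s ∈ Finset.range t, f (g s)
      = ∑ j, (((Finset.range t).filter (fun s => g s = j)).card : ℝ) * f j := by
  rw [← Finset.sum_fiberwise_of_maps_to (fun s _ => Finset.mem_univ (g s)) (fun s => f (g s))]
  refine Finset.sum_congr rfl fun j _ => ?_
  rw [Finset.sum_congr rfl (fun s hs => by rw [(Finset.mem_filter.1 hs).2]), Finset.sum_const,
    nsmul_eq_mul]

lemma sum_card_fiber (t : ℕ) (g : ℕ → Fin k) :
    ∑ j, (((Finset.range t).filter (fun s => g s = j)).card : ℝ) = t := by
  rw [← Nat.cast_sum]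
  rw [← Finset.card_eq_sum_card_fiberwise (fun s _ => Finset.mem_univ (g s))]
  simp

lemma sum_mul_le_ciSup (w g : Fin k → ℝ) (hw : ∀ i, 0 ≤ w i)
    (hw1 : ∑ i, w i = 1) : ∑ i, w i * g i ≤ ⨆ i, g i := by
  calc ∑ i, w i * g i ≤ ∑ i, w i * ⨆ i', g i' :=
        Finset.sum_le_sum fun i _ => mul_le_mul_of_nonneg_left (le_ciSup_fin g i) (hw i)
    _ = ⨆ i', g i' := by rw [← Finset.sum_mul, hw1, one_mul]

lemma ciInf_le_sum_mul (w g : Fin k → ℝ) (hw : ∀ i, 0 ≤ w i)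
    (hw1 : ∑ i, w i = 1) : (⨅ i, g i) ≤ ∑ i, g i * w i := by
  calc (⨅ i', g i') = ∑ i, (⨅ i', g i') * w i := by rw [← Finset.mul_sum, hw1, mul_one]
    _ ≤ ∑ i, g i * w i :=
        Finset.sum_le_sum fun i _ => mul_le_mul_of_nonneg_right (ciInf_fin_le g i) (hw i)

/-- empirical frequency is in the simplex -/
lemma empirical_mem {t : ℕ} (ht : 1 ≤ t) (g : ℕ → Fin k) :
    (fun j => (((Finset.range t).filter (fun s => g s = j)).card : ℝ) / t)
      ∈ stdSimplex ℝ (Fin k) := by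
  constructor
  · intro j; positivity
  · rw [← Finset.sum_div, sum_card_fiber, div_self (by positivity)]

end helpers

section game
variable {m n : ℕ} [NeZero m] [NeZero n] (M : Fin m → Fin n → ℝ)

lemma payoff_eq (σ₁ : Fin m → ℝ) (σ₂ : Fin n → ℝ) :
    payoff M σ₁ σ₂ = ∑ i, σ₁ i * ∑ j, M i j * σ₂ j := by
  simp [payoff, Finset.mul_sum, mul_assoc]

lemma payoff_eq' (σ₁ : Fin m → ℝ) (σ₂ : Fin n → ℝ) :
    payoff M σ₁ σ₂ = ∑ j, (∑ i, σ₁ i * M i j) * σ₂ j := by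
  rw [payoff, Finset.sum_comm]
  simp [Finset.sum_mul]

lemma pure_mem (i : Fin m) : (fun i' => if i' = i then (1:ℝ) else 0) ∈ stdSimplex ℝ (Fin m) := by
  constructor
  · intro i'; dsimp only; split <;> norm_num
  · simp

lemma simplex_nonempty : Nonempty (stdSimplex ℝ (Fin m)) :=
  ⟨⟨_, pure_mem (Classical.arbitrary (Fin m))⟩⟩

variable {M} (hM : ∀ i j, M i j ∈ Set.Icc (0:ℝ) 1)
include hM

lemma payoff_nonneg {σ₁ : Fin m → ℝ} {σ₂ : Fin n → ℝ}
    (h₁ : σ₁ ∈ stdSimplex ℝ (Fin m)) (h₂ : σ₂ ∈ stdSimplex ℝ (Fin n)) :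
    0 ≤ payoff M σ₁ σ₂ := by
  refine Finset.sum_nonneg fun i _ => Finset.sum_nonneg fun j _ => ?_
  exact mul_nonneg (mul_nonneg (h₁.1 i) (hM i j).1) (h₂.1 j)

lemma payoff_le_one {σ₁ : Fin m → ℝ} {σ₂ : Fin n → ℝ}
    (h₁ : σ₁ ∈ stdSimplex ℝ (Fin m)) (h₂ : σ₂ ∈ stdSimplex ℝ (Fin n)) :
    payoff M σ₁ σ₂ ≤ 1 := by
  rw [payoff_eq]
  calc ∑ i, σ₁ i * ∑ j, M i j * σ₂ j ≤ ∑ i, σ₁ i * 1 := by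
        refine Finset.sum_le_sum fun i _ => mul_le_mul_of_nonneg_left ?_ (h₁.1 i)
        calc ∑ j, M i j * σ₂ j ≤ ∑ j, 1 * σ₂ j :=
              Finset.sum_le_sum fun j _ => mul_le_mul_of_nonneg_right (hM i j).2 (h₂.1 j)
          _ = 1 := by simp [h₂.2]
    _ = 1 := by simp [h₁.2]

lemma bddAbove_payoff {σ₂ : Fin n → ℝ} (h₂ : σ₂ ∈ stdSimplex ℝ (Fin n)) :
    BddAbove (Set.range fun σ₁ : stdSimplex ℝ (Fin m) => payoff M σ₁.1 σ₂) := by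
  refine ⟨1, fun x hx => ?_⟩
  obtain ⟨σ₁, rfl⟩ := hx
  exact payoff_le_one hM σ₁.2 h₂

/-- key inequality 1: the game value is at most the best-response payoff against any
empirical frequency, expressed as a normalized sum. -/
lemma gameValue_le_sup {t : ℕ} (ht : 1 ≤ t) (g : ℕ → Fin n) :
    gameValue M ≤ (⨆ i, ∑ s ∈ Finset.range t, M i (g s)) / t := by
  haveI : Nonempty (stdSimplex ℝ (Fin m)) := simplex_nonempty (m := m)
  have ht' : (0:ℝ) < t := by exact_mod_cast ht
  set σ₂ : Fin n → ℝ := fun j => (((Finset.range t).filter (fun s => g s = j)).card : ℝ) / t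
    with hσ₂def
  have hσ₂ : σ₂ ∈ stdSimplex ℝ (Fin n) := empirical_mem ht g
  have step1 : gameValue M ≤ ⨆ σ₁ : stdSimplex ℝ (Fin m), payoff M σ₁.1 σ₂ := by
    refine ciInf_le ⟨0, fun x hx => ?_⟩ (⟨σ₂, hσ₂⟩ : stdSimplex ℝ (Fin n))
    obtain ⟨σ₂', rfl⟩ := hx
    refine le_trans (payoff_nonneg hM (pure_mem (Classical.arbitrary (Fin m))) σ₂'.2) ?_
    exact le_ciSup (bddAbove_payoff hM σ₂'.2) ⟨_, pure_mem (Classical.arbitrary (Fin m))⟩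
  refine step1.trans ?_
  have step2 : (⨆ σ₁ : stdSimplex ℝ (Fin m), payoff M σ₁.1 σ₂)
      ≤ ⨆ i, ∑ j, M i j * σ₂ j := by
    refine ciSup_le fun σ₁ => ?_
    rw [payoff_eq]
    exact sum_mul_le_ciSup _ _ (fun i => σ₁.2.1 i) σ₁.2.2
  refine step2.trans ?_
  have hterm : ∀ i, ∑ j, M i j * σ₂ j = (∑ s ∈ Finset.range t, M i (g s)) / t := by
    intro i
    rw [sum_comp_eq t g (fun j => M i j), Finset.sum_div]
    refine Finset.sum_congr rfl fun j _ => ?_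
    simp only [hσ₂def]
    ring
  exact le_of_eq ((iSup_congr hterm).trans (ciSup_div_fin _ ht'))

/-- key inequality 2 -/
lemma inf_le_gameValue {t : ℕ} (ht : 1 ≤ t) (g : ℕ → Fin m) :
    (⨅ j, ∑ s ∈ Finset.range t, M (g s) j) / t ≤ gameValue M := by
  haveI : Nonempty (stdSimplex ℝ (Fin n)) := simplex_nonempty (m := n)
  have ht' : (0:ℝ) < t := by exact_mod_cast ht
  set σ₁ : Fin m → ℝ := fun i => (((Finset.range t).filter (fun s => g s = i)).card : ℝ) / t
    with hσ₁def
  have hσ₁ : σ₁ ∈ stdSimplex ℝ (Fin m) := empirical_mem ht g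
  have key : (⨅ j, ∑ s ∈ Finset.range t, M (g s) j) / t = ⨅ j, ∑ i, σ₁ i * M i j := by
    rw [← ciInf_div_fin _ ht']
    refine iInf_congr fun j => ?_
    rw [sum_comp_eq t g (fun i => M i j), Finset.sum_div]
    refine Finset.sum_congr rfl fun i _ => ?_
    simp only [hσ₁def]; ring
  rw [key]
  refine le_ciInf fun σ₂ => ?_
  have h1 : (⨅ j, ∑ i, σ₁ i * M i j) ≤ payoff M σ₁ σ₂.1 := by
    rw [payoff_eq']
    exact ciInf_le_sum_mul _ _ (fun j => σ₂.2.1 j) σ₂.2.2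
  exact h1.trans (le_ciSup (bddAbove_payoff hM σ₂.2) ⟨σ₁, hσ₁⟩)

end game

lemma neg_one_le_div_nat {x : ℝ} {t : ℕ} (h : -(t:ℝ) ≤ x) : -1 ≤ x / t := by
  rcases Nat.eq_zero_or_pos t with rfl | ht
  · simp
  · rw [le_div_iff₀ (by positivity)]
    simpa using h

lemma main_det {m n : ℕ} [NeZero m] [NeZero n] {M : Fin m → Fin n → ℝ}
    (hM : ∀ i j, M i j ∈ Set.Icc (0:ℝ) 1) (Iω : ℕ → Fin m) (Jω : ℕ → Fin n)
    {ε : ℝ} (hε : 0 ≤ ε)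
    (h1 : limsup (fun t : ℕ =>
        ((⨆ i, ∑ s ∈ Finset.range t, M i (Jω s)) -
          ∑ s ∈ Finset.range t, M (Iω s) (Jω s)) / (t : ℝ)) atTop ≤ ε)
    (h2 : limsup (fun t : ℕ =>
        ((⨆ j, ∑ s ∈ Finset.range t, (1 - M (Iω s) j)) -
          ∑ s ∈ Finset.range t, (1 - M (Iω s) (Jω s))) / (t : ℝ)) atTop ≤ ε) :
    gameValue M - 2 * ε ≤ liminf (fun t : ℕ =>
        (⨅ j, ∑ s ∈ Finset.range t, M (Iω s) j) / (t : ℝ)) atTop ∧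
    limsup (fun t : ℕ =>
        (⨆ i, ∑ s ∈ Finset.range t, M i (Jω s)) / (t : ℝ)) atTop ≤ gameValue M + 2 * ε := by
  have i0 : Fin m := Classical.arbitrary _
  have j0 : Fin n := Classical.arbitrary _
  set v := gameValue M with hv
  -- named sequences
  set Af : ℕ → ℝ := fun t : ℕ =>
    (⨆ i, ∑ s ∈ Finset.range t, M i (Jω s)) / (t : ℝ) with hAf
  set Bf : ℕ → ℝ := fun t : ℕ =>
    (⨅ j, ∑ s ∈ Finset.range t, M (Iω s) j) / (t : ℝ) with hBf
  set f1 : ℕ → ℝ := fun t : ℕ =>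
    ((⨆ i, ∑ s ∈ Finset.range t, M i (Jω s)) -
      ∑ s ∈ Finset.range t, M (Iω s) (Jω s)) / (t : ℝ) with hf1
  set f2 : ℕ → ℝ := fun t : ℕ =>
    ((∑ s ∈ Finset.range t, M (Iω s) (Jω s)) -
      ⨅ j, ∑ s ∈ Finset.range t, M (Iω s) j) / (t : ℝ) with hf2
  -- rewrite h2 into f2 form
  have h2' : limsup f2 atTop ≤ ε := by
    have heq : (fun t : ℕ =>
        ((⨆ j, ∑ s ∈ Finset.range t, (1 - M (Iω s) j)) -
          ∑ s ∈ Finset.range t, (1 - M (Iω s) (Jω s))) / (t : ℝ)) = f2 := by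
      funext t
      have e1 : ∀ j : Fin n, ∑ s ∈ Finset.range t, (1 - M (Iω s) j)
          = (t : ℝ) - ∑ s ∈ Finset.range t, M (Iω s) j := by
        intro j; rw [Finset.sum_sub_distrib]; simp
      have e2 : ∑ s ∈ Finset.range t, (1 - M (Iω s) (Jω s))
          = (t : ℝ) - ∑ s ∈ Finset.range t, M (Iω s) (Jω s) := by
        rw [Finset.sum_sub_distrib]; simp
      rw [iSup_congr e1, ciSup_const_sub_fin, e2, hf2]
      ring_nf
    rwa [heq] at h2
  -- pointwise bounds
  have sum_nn : ∀ (t : ℕ) (i : Fin m) (j : Fin n), (0:ℝ) ≤ ∑ s ∈ Finset.range t, M i (Jω s) ∧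
      (0:ℝ) ≤ ∑ s ∈ Finset.range t, M (Iω s) j ∧ (0:ℝ) ≤ ∑ s ∈ Finset.range t, M (Iω s) (Jω s) :=
    fun t i j => ⟨Finset.sum_nonneg fun s _ => (hM _ _).1,
      Finset.sum_nonneg fun s _ => (hM _ _).1, Finset.sum_nonneg fun s _ => (hM _ _).1⟩
  have sum_le : ∀ (t : ℕ) (i : Fin m) (j : Fin n),
      (∑ s ∈ Finset.range t, M i (Jω s)) ≤ t ∧ (∑ s ∈ Finset.range t, M (Iω s) j) ≤ t ∧
      (∑ s ∈ Finset.range t, M (Iω s) (Jω s)) ≤ t := by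
    intro t i j
    refine ⟨?_, ?_, ?_⟩ <;>
      · calc _ ≤ ∑ s ∈ Finset.range t, (1:ℝ) := Finset.sum_le_sum fun s _ => (hM _ _).2
          _ = t := by simp
  have hAsup_nn : ∀ t : ℕ, (0:ℝ) ≤ ⨆ i, ∑ s ∈ Finset.range t, M i (Jω s) :=
    fun t => le_trans (sum_nn t i0 j0).1 (le_ciSup_fin (fun i => ∑ s ∈ Finset.range t, M i (Jω s)) i0)
  have hAsup_le : ∀ t : ℕ, (⨆ i, ∑ s ∈ Finset.range t, M i (Jω s)) ≤ t :=
    fun t => ciSup_le fun i => (sum_le t i j0).1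
  have hBinf_nn : ∀ t : ℕ, (0:ℝ) ≤ ⨅ j, ∑ s ∈ Finset.range t, M (Iω s) j :=
    fun t => le_ciInf fun j => (sum_nn t i0 j).2.1
  have hBinf_le : ∀ t : ℕ, (⨅ j, ∑ s ∈ Finset.range t, M (Iω s) j) ≤ t :=
    fun t => le_trans (ciInf_fin_le (fun j => ∑ s ∈ Finset.range t, M (Iω s) j) j0) (sum_le t i0 j0).2.1
  have hA0 : ∀ t : ℕ, 0 ≤ Af t := fun t => div_nonneg (hAsup_nn t) (Nat.cast_nonneg t)
  have hA1 : ∀ t : ℕ, Af t ≤ 1 := fun t =>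
    div_le_one_of_le₀ (hAsup_le t) (Nat.cast_nonneg t)
  have hB0 : ∀ t : ℕ, 0 ≤ Bf t := fun t => div_nonneg (hBinf_nn t) (Nat.cast_nonneg t)
  have hB1 : ∀ t : ℕ, Bf t ≤ 1 := fun t =>
    div_le_one_of_le₀ (hBinf_le t) (Nat.cast_nonneg t)
  have hf1u : ∀ t : ℕ, f1 t ≤ 1 := fun t =>
    div_le_one_of_le₀ (by linarith [(hAsup_le t), (sum_nn t i0 j0).2.2]) (Nat.cast_nonneg t)
  have hf1l : ∀ t : ℕ, -1 ≤ f1 t := fun t =>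
    neg_one_le_div_nat (by linarith [hAsup_nn t, (sum_le t i0 j0).2.2])
  have hf2u : ∀ t : ℕ, f2 t ≤ 1 := fun t =>
    div_le_one_of_le₀ (by linarith [(sum_le t i0 j0).2.2, hBinf_nn t]) (Nat.cast_nonneg t)
  have hf2l : ∀ t : ℕ, -1 ≤ f2 t := fun t =>
    neg_one_le_div_nat (by linarith [(sum_nn t i0 j0).2.2, hBinf_le t])
  -- boundedness
  have bAu : IsBoundedUnder (· ≤ ·) atTop Af := isBoundedUnder_of ⟨1, hA1⟩
  have bAl : IsBoundedUnder (· ≥ ·) atTop Af := isBoundedUnder_of ⟨0, hA0⟩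
  have bBu : IsBoundedUnder (· ≤ ·) atTop Bf := isBoundedUnder_of ⟨1, hB1⟩
  have bBl : IsBoundedUnder (· ≥ ·) atTop Bf := isBoundedUnder_of ⟨0, hB0⟩
  have b1u : IsBoundedUnder (· ≤ ·) atTop f1 := isBoundedUnder_of ⟨1, hf1u⟩
  have b1l : IsBoundedUnder (· ≥ ·) atTop f1 := isBoundedUnder_of ⟨-1, hf1l⟩
  have b2u : IsBoundedUnder (· ≤ ·) atTop f2 := isBoundedUnder_of ⟨1, hf2u⟩
  have b2l : IsBoundedUnder (· ≥ ·) atTop f2 := isBoundedUnder_of ⟨-1, hf2l⟩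
  have b2Bu : IsBoundedUnder (· ≤ ·) atTop (fun t => f2 t + Bf t) :=
    isBoundedUnder_of ⟨2, fun t => by linarith [hf2u t, hB1 t]⟩
  have b2Bl : IsBoundedUnder (· ≥ ·) atTop (fun t => f2 t + Bf t) :=
    isBoundedUnder_of ⟨-1, fun t => by linarith [hf2l t, hB0 t]⟩
  have b12u : IsBoundedUnder (· ≤ ·) atTop (fun t => f1 t + f2 t) :=
    isBoundedUnder_of ⟨2, fun t => by linarith [hf1u t, hf2u t]⟩
  have b12l : IsBoundedUnder (· ≥ ·) atTop (fun t => f1 t + f2 t) :=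
    isBoundedUnder_of ⟨-2, fun t => by linarith [hf1l t, hf2l t]⟩
  -- eventual inequalities against the value
  have hAev : ∀ᶠ t : ℕ in atTop, v ≤ Af t :=
    eventually_atTop.2 ⟨1, fun t ht => gameValue_le_sup hM ht Jω⟩
  have hBev : ∀ᶠ t : ℕ in atTop, Bf t ≤ v :=
    eventually_atTop.2 ⟨1, fun t ht => inf_le_gameValue hM ht Iω⟩
  have hlimB : limsup Bf atTop ≤ v := limsup_le_of_le bBl.isCoboundedUnder_le hBev
  have hliminfA : v ≤ liminf Af atTop := le_liminf_of_le bAu.isCoboundedUnder_ge hAev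
  -- decomposition
  have hdecomp : Af = f1 + fun t => f2 t + Bf t := by
    funext t
    show Af t = f1 t + (f2 t + Bf t)
    rw [hAf, hf1, hf2, hBf]
    simp only
    rw [← add_div, ← add_div]
    congr 1
    ring
  have hdecomp2 : Af = (fun t => f1 t + f2 t) + Bf := by
    funext t
    show Af t = (f1 t + f2 t) + Bf t
    rw [hAf, hf1, hf2, hBf]
    simp only
    rw [← add_div, ← add_div]
    congr 1
    ring
  constructor
  · -- liminf part
    have step3 : liminf Af atTop ≤ limsup (fun t => f1 t + f2 t) atTop + liminf Bf atTop := by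
      rw [hdecomp2]
      exact liminf_add_le b12l b12u bBl bBu.isCoboundedUnder_ge
    have step4 : limsup (fun t => f1 t + f2 t) atTop ≤ ε + ε := by
      have := limsup_add_le (u := f1) (v := f2) b1l b1u b2l.isCoboundedUnder_le b2u
      exact le_trans this (add_le_add h1 h2')
    linarith
  · -- limsup part
    have step1 : limsup Af atTop ≤ limsup f1 atTop + limsup (fun t => f2 t + Bf t) atTop := by
      rw [hdecomp]
      exact limsup_add_le b1l b1u b2Bl.isCoboundedUnder_le b2Bu
    have step2 : limsup (fun t => f2 t + Bf t) atTop ≤ limsup f2 atTop + limsup Bf atTop :=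
      limsup_add_le b2l b2u bBl.isCoboundedUnder_le bBu
    linarith

/-- If both players of the repeated zero-sum matrix game `M` (with value `v`) are
ε-Hannan consistent, then almost surely
`v - 2ε ≤ liminf u₁(σ̂₁(t), br)` and `limsup u₁(br, σ̂₂(t)) ≤ v + 2ε`,
where `u₁(σ̂₁(t), br) = min_j Σ_i σ̂₁(t)(i) M i j = (⨅ j, Σ_{s<t} M (I s) j)/t` and
`u₁(br, σ̂₂(t)) = max_i Σ_j σ̂₂(t)(j) M i j = (⨆ i, Σ_{s<t} M i (J s))/t` are the
best-response values against the empirical frequency strategies. -/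
theorem stmt2 {m n : ℕ} [NeZero m] [NeZero n]
    {Ω : Type*} [MeasurableSpace Ω] (P : Measure Ω) [IsProbabilityMeasure P]
    (M : Fin m → Fin n → ℝ) (hM : ∀ i j, M i j ∈ Set.Icc (0:ℝ) 1)
    (I : Ω → ℕ → Fin m) (J : Ω → ℕ → Fin n) (ε : ℝ) (hε : 0 ≤ ε)
    (hHC1 : ∀ᵐ ω ∂P, limsup (fun t : ℕ =>
        ((⨆ i, ∑ s ∈ Finset.range t, M i (J ω s)) -
          ∑ s ∈ Finset.range t, M (I ω s) (J ω s)) / (t : ℝ)) atTop ≤ ε)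
    (hHC2 : ∀ᵐ ω ∂P, limsup (fun t : ℕ =>
        ((⨆ j, ∑ s ∈ Finset.range t, (1 - M (I ω s) j)) -
          ∑ s ∈ Finset.range t, (1 - M (I ω s) (J ω s))) / (t : ℝ)) atTop ≤ ε) :
    ∀ᵐ ω ∂P,
      gameValue M - 2 * ε ≤ liminf (fun t : ℕ =>
          (⨅ j, ∑ s ∈ Finset.range t, M (I ω s) j) / (t : ℝ)) atTop ∧
      limsup (fun t : ℕ =>
          (⨆ i, ∑ s ∈ Finset.range t, M i (J ω s)) / (t : ℝ)) atTop ≤ gameValue M + 2 * ε := by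
  filter_upwards [hHC1, hHC2] with ω h1 h2
  exact main_det hM (I ω) (J ω) hε h1 h2
end

section
/- Consider a repeated zero-sum matrix game with cε-bounded distortion: players observe distorted payoffs ṽ_{ij}(t) which almost surely eventually satisfy |ṽ_{ij}(t) − v_{ij}| ≤ cε for all i, j, where (v_{ij}) = M is a fixed matrix with value v. If both players are ε-Hannan consistent with respect to the distorted payoffs, then almost surely v − (c+1)ε ≤ liminf_{t→∞} g̃(t) ≤ limsup_{t→∞} g̃(t) ≤ v + (c+1)ε, where g̃(t) is the average distorted payoff received by player 1. -/
open MeasureTheory Filter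
open scoped BigOperators

section Helpers

variable {ι : Type*} [Fintype ι] [Nonempty ι]

lemma aux_ciSup_le_ciSup_add {f g : ι → ℝ} {K : ℝ} (h : ∀ i, f i ≤ g i + K) :
    (⨆ i, f i) ≤ (⨆ i, g i) + K :=
  ciSup_le fun i => (h i).trans
    (add_le_add_left (le_ciSup (Set.finite_range g).bddAbove i) K)

lemma aux_ciInf_le_ciInf_add {f g : ι → ℝ} {K : ℝ} (h : ∀ i, f i ≤ g i + K) :
    (⨅ i, f i) ≤ (⨅ i, g i) + K := by
  obtain ⟨i₀, hi₀⟩ := Finite.exists_min g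
  have hg : (⨅ i, g i) = g i₀ :=
    le_antisymm (ciInf_le (Set.finite_range g).bddBelow i₀) (le_ciInf hi₀)
  rw [hg]
  exact (ciInf_le (Set.finite_range f).bddBelow i₀).trans (h i₀)

lemma aux_ciSup_const_sub (f : ι → ℝ) (a : ℝ) : (⨆ i, (a - f i)) = a - ⨅ i, f i := by
  apply le_antisymm
  · exact ciSup_le fun i => sub_le_sub_left (ciInf_le (Set.finite_range f).bddBelow i) a
  · obtain ⟨i₀, hi₀⟩ := Finite.exists_min f
    have hg : (⨅ i, f i) = f i₀ :=
      le_antisymm (ciInf_le (Set.finite_range f).bddBelow i₀) (le_ciInf hi₀)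
    rw [hg]
    exact le_ciSup (Set.finite_range fun i => a - f i).bddAbove i₀

end Helpers

lemma payoff_mem_Icc {m n : ℕ} (M : Fin m → Fin n → ℝ)
    (hM : ∀ i j, M i j ∈ Set.Icc (0:ℝ) 1) {σ₁ : Fin m → ℝ} {σ₂ : Fin n → ℝ}
    (h₁ : σ₁ ∈ stdSimplex ℝ (Fin m)) (h₂ : σ₂ ∈ stdSimplex ℝ (Fin n)) :
    payoff M σ₁ σ₂ ∈ Set.Icc (0:ℝ) 1 := by
  constructor
  · refine Finset.sum_nonneg fun i _ => Finset.sum_nonneg fun j _ => ?_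
    have := (hM i j).1
    have := h₁.1 i
    have := h₂.1 j
    positivity
  · calc payoff M σ₁ σ₂ ≤ ∑ i, ∑ j, σ₁ i * σ₂ j := by
          refine Finset.sum_le_sum fun i _ => Finset.sum_le_sum fun j _ => ?_
          have h1 := h₁.1 i
          have h2 := h₂.1 j
          have h3 := (hM i j).1
          have h4 := (hM i j).2
          have := mul_le_mul_of_nonneg_right (mul_le_mul_of_nonneg_left h4 h1) h2
          nlinarith [this]
    _ = 1 := by rw [← Finset.sum_mul_sum, h₁.2, h₂.2, one_mul]

lemma gameValue_le_row_sup {m n : ℕ} [NeZero m] [NeZero n] (M : Fin m → Fin n → ℝ)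
    (hM : ∀ i j, M i j ∈ Set.Icc (0:ℝ) 1) {q : Fin n → ℝ} (hq : q ∈ stdSimplex ℝ (Fin n)) :
    gameValue M ≤ ⨆ i, ∑ j, M i j * q j := by
  haveI : Nonempty (stdSimplex ℝ (Fin m)) := ⟨⟨_, ite_eq_mem_stdSimplex ℝ (default : Fin m)⟩⟩
  have hba : ∀ σ₂ : stdSimplex ℝ (Fin n),
      BddAbove (Set.range fun σ₁ : stdSimplex ℝ (Fin m) => payoff M σ₁.1 σ₂.1) := by
    intro σ₂
    refine ⟨1, ?_⟩
    rintro x ⟨σ₁, rfl⟩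
    exact (payoff_mem_Icc M hM σ₁.2 σ₂.2).2
  have hb : BddBelow (Set.range fun σ₂ : stdSimplex ℝ (Fin n) =>
      ⨆ σ₁ : stdSimplex ℝ (Fin m), payoff M σ₁.1 σ₂.1) := by
    refine ⟨0, ?_⟩
    rintro x ⟨σ₂, rfl⟩
    exact le_trans (payoff_mem_Icc M hM
      (Classical.arbitrary (stdSimplex ℝ (Fin m))).2 σ₂.2).1 (le_ciSup (hba σ₂) _)
  refine le_trans (ciInf_le hb ⟨q, hq⟩) (ciSup_le fun σ₁ => ?_)
  have hrow : ∀ i, (∑ j, M i j * q j) ≤ ⨆ i', ∑ j, M i' j * q j :=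
    fun i => le_ciSup (f := fun i' => ∑ j, M i' j * q j) (Set.finite_range _).bddAbove i
  calc payoff M σ₁.1 q = ∑ i, σ₁.1 i * ∑ j, M i j * q j := by
        simp [payoff, Finset.mul_sum, mul_assoc]
  _ ≤ ∑ i, σ₁.1 i * ⨆ i', ∑ j, M i' j * q j := by
        refine Finset.sum_le_sum fun i _ => ?_
        exact mul_le_mul_of_nonneg_left (hrow i) (σ₁.2.1 i)
  _ = ⨆ i', ∑ j, M i' j * q j := by rw [← Finset.sum_mul, σ₁.2.2, one_mul]

lemma col_inf_le_gameValue {m n : ℕ} [NeZero m] [NeZero n] (M : Fin m → Fin n → ℝ)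
    (hM : ∀ i j, M i j ∈ Set.Icc (0:ℝ) 1) {p : Fin m → ℝ} (hp : p ∈ stdSimplex ℝ (Fin m)) :
    (⨅ j, ∑ i, p i * M i j) ≤ gameValue M := by
  haveI : Nonempty (stdSimplex ℝ (Fin n)) := ⟨⟨_, ite_eq_mem_stdSimplex ℝ (default : Fin n)⟩⟩
  refine le_ciInf fun σ₂ => ?_
  have hba : BddAbove (Set.range fun σ₁ : stdSimplex ℝ (Fin m) => payoff M σ₁.1 σ₂.1) := by
    refine ⟨1, ?_⟩
    rintro x ⟨σ₁, rfl⟩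
    exact (payoff_mem_Icc M hM σ₁.2 σ₂.2).2
  refine le_trans ?_ (le_ciSup hba ⟨p, hp⟩)
  have hcol : ∀ j, (⨅ j', ∑ i, p i * M i j') ≤ ∑ i, p i * M i j :=
    fun j => ciInf_le (Set.finite_range _).bddBelow j
  calc (⨅ j', ∑ i, p i * M i j')
      = ∑ j, (⨅ j', ∑ i, p i * M i j') * σ₂.1 j := by
        rw [← Finset.mul_sum, σ₂.2.2, mul_one]
  _ ≤ ∑ j, (∑ i, p i * M i j) * σ₂.1 j := by
        refine Finset.sum_le_sum fun j _ => ?_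
        exact mul_le_mul_of_nonneg_right (hcol j) (σ₂.2.1 j)
  _ = payoff M p σ₂.1 := by
        unfold payoff
        rw [Finset.sum_comm]
        simp [Finset.sum_mul]

/-- Repeated zero-sum matrix game with `cε`-bounded distortion: players observe distorted
payoffs `vtil` which a.s. eventually satisfy `|vtil t i j - M i j| ≤ cε`. If both players
are ε-Hannan consistent with respect to the distorted payoffs, then almost surely
`v - (c+1)ε ≤ liminf g̃(t) ≤ limsup g̃(t) ≤ v + (c+1)ε`, where `g̃(t)` is the average
distorted payoff received by player 1 and `v` is the value of `M`. -/
theorem stmt6 {m n : ℕ} [NeZero m] [NeZero n]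
    {Ω : Type*} [MeasurableSpace Ω] (P : Measure Ω) [IsProbabilityMeasure P]
    (M : Fin m → Fin n → ℝ) (hM : ∀ i j, M i j ∈ Set.Icc (0:ℝ) 1)
    (vtil : Ω → ℕ → Fin m → Fin n → ℝ)
    (hvtil : ∀ ω t i j, vtil ω t i j ∈ Set.Icc (0:ℝ) 1)
    (I : Ω → ℕ → Fin m) (J : Ω → ℕ → Fin n) (c ε : ℝ) (hc : 0 < c) (hε : 0 < ε)
    (hdist : ∀ᵐ ω ∂P, ∃ t₀ : ℕ, ∀ t ≥ t₀, ∀ i j, |vtil ω t i j - M i j| ≤ c * ε)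
    (hHC1 : ∀ᵐ ω ∂P, limsup (fun t : ℕ =>
        ((⨆ i, ∑ s ∈ Finset.range t, vtil ω s i (J ω s)) -
          ∑ s ∈ Finset.range t, vtil ω s (I ω s) (J ω s)) / (t : ℝ)) atTop ≤ ε)
    (hHC2 : ∀ᵐ ω ∂P, limsup (fun t : ℕ =>
        ((⨆ j, ∑ s ∈ Finset.range t, (1 - vtil ω s (I ω s) j)) -
          ∑ s ∈ Finset.range t, (1 - vtil ω s (I ω s) (J ω s))) / (t : ℝ)) atTop ≤ ε) :
    ∀ᵐ ω ∂P,
      gameValue M - (c + 1) * ε ≤ liminf (fun t : ℕ =>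
          (∑ s ∈ Finset.range t, vtil ω s (I ω s) (J ω s)) / (t : ℝ)) atTop ∧
      limsup (fun t : ℕ =>
          (∑ s ∈ Finset.range t, vtil ω s (I ω s) (J ω s)) / (t : ℝ)) atTop ≤
        gameValue M + (c + 1) * ε := by
  have hcε : 0 < c * ε := mul_pos hc hε
  filter_upwards [hdist, hHC1, hHC2] with ω hd h1 h2
  obtain ⟨t₀, ht₀⟩ := hd
  set v := gameValue M with hv
  -- abbreviations
  set S : ℕ → ℝ := fun t => ∑ s ∈ Finset.range t, vtil ω s (I ω s) (J ω s) with hS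
  have hS_nonneg : ∀ t : ℕ, 0 ≤ S t :=
    fun t => Finset.sum_nonneg fun s _ => (hvtil ω s _ _).1
  have hS_le : ∀ t : ℕ, S t ≤ t := fun t => by
    calc S t ≤ ∑ s ∈ Finset.range t, (1:ℝ) :=
          Finset.sum_le_sum fun s _ => (hvtil ω s _ _).2
    _ = t := by simp
  have hg01 : ∀ t : ℕ, S t / (t:ℝ) ∈ Set.Icc (0:ℝ) 1 := fun t => by
    constructor
    · exact div_nonneg (hS_nonneg t) (Nat.cast_nonneg t)
    · exact div_le_one_of_le₀ (hS_le t) (Nat.cast_nonneg t)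
  -- eventual smallness of t₀/t
  have htend : Tendsto (fun t : ℕ => (t₀:ℝ) / t) atTop (nhds 0) :=
    tendsto_const_div_atTop_nhds_zero_nat _
  constructor
  · -- LOWER BOUND
    set X : ℕ → ℝ := fun t => ⨆ i, ∑ s ∈ Finset.range t, vtil ω s i (J ω s) with hX
    have hX_le : ∀ t : ℕ, X t ≤ t := fun t => by
      refine ciSup_le fun i => ?_
      calc (∑ s ∈ Finset.range t, vtil ω s i (J ω s)) ≤ ∑ s ∈ Finset.range t, (1:ℝ) :=
            Finset.sum_le_sum fun s _ => (hvtil ω s _ _).2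
      _ = t := by simp
    -- boundedness of the HC1 sequence
    have hDbdd : IsBoundedUnder (· ≤ ·) atTop (fun t : ℕ => (X t - S t) / (t:ℝ)) := by
      refine isBoundedUnder_of ⟨1, fun t => ?_⟩
      rcases Nat.eq_zero_or_pos t with h | h
      · simp [h]
      · have htpos : (0:ℝ) < t := by exact_mod_cast h
        rw [div_le_one htpos]
        linarith [hX_le t, hS_nonneg t]
    refine le_of_forall_pos_le_add fun δ hδ => ?_
    rw [← sub_le_iff_le_add]
    refine le_liminf_of_le
      ((isBoundedUnder_of ⟨1, fun t => (hg01 t).2⟩).isCoboundedUnder_ge) ?_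
    have hD : ∀ᶠ t in atTop, (X t - S t) / (t:ℝ) < ε + δ/2 :=
      eventually_lt_of_limsup_lt (lt_of_le_of_lt h1 (by linarith)) hDbdd
    have hsmall : ∀ᶠ t : ℕ in atTop, (t₀:ℝ) / t ≤ δ/2 :=
      htend.eventually (eventually_le_nhds (by linarith))
    filter_upwards [hD, hsmall, eventually_ge_atTop t₀, eventually_ge_atTop 1]
      with t hDt hsm ht0 ht1
    have htpos : (0:ℝ) < t := by exact_mod_cast ht1
    -- distortion bound for each row
    have hdistS : ∀ i : Fin m,
        (∑ s ∈ Finset.range t, M i (J ω s)) ≤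
          (∑ s ∈ Finset.range t, vtil ω s i (J ω s)) + (c*ε*t + t₀) := by
      intro i
      have key : ∑ s ∈ Finset.range t, (M i (J ω s) - vtil ω s i (J ω s)) ≤ c*ε*t + t₀ := by
        rw [Finset.range_eq_Ico, ← Finset.sum_Ico_consecutive _ (Nat.zero_le t₀) ht0]
        have hA : ∑ s ∈ Finset.Ico 0 t₀, (M i (J ω s) - vtil ω s i (J ω s)) ≤ t₀ := by
          calc _ ≤ ∑ s ∈ Finset.Ico 0 t₀, (1:ℝ) := by
                refine Finset.sum_le_sum fun s _ => ?_
                have h1' := (hM i (J ω s)).2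
                have h2' := (hvtil ω s i (J ω s)).1
                linarith
          _ = t₀ := by simp
        have hB : ∑ s ∈ Finset.Ico t₀ t, (M i (J ω s) - vtil ω s i (J ω s)) ≤
            (Finset.Ico t₀ t).card • (c*ε) := by
          refine Finset.sum_le_card_nsmul _ _ _ fun s hs => ?_
          have habs := abs_le.mp (ht₀ s (Finset.mem_Ico.mp hs).1 i (J ω s))
          linarith [habs.1]
        have hcard : ((Finset.Ico t₀ t).card : ℝ) ≤ t := by
          rw [Nat.card_Ico]
          exact_mod_cast Nat.sub_le t t₀
        rw [nsmul_eq_mul] at hB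
        nlinarith [hcε]
      rw [Finset.sum_sub_distrib] at key
      linarith
    -- sup of true rows bounded by X
    have hXsup : (⨆ i, ∑ s ∈ Finset.range t, M i (J ω s)) ≤ X t + (c*ε*t + t₀) :=
      aux_ciSup_le_ciSup_add hdistS
    -- empirical lower bound via game value
    have hemp : v * t ≤ ⨆ i, ∑ s ∈ Finset.range t, M i (J ω s) := by
      set q : Fin n → ℝ := fun j =>
        (∑ s ∈ Finset.range t, if J ω s = j then (1:ℝ) else 0) / t with hq
      have hqmem : q ∈ stdSimplex ℝ (Fin n) := by
        constructor
        · intro j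
          refine div_nonneg (Finset.sum_nonneg fun s _ => ?_) (Nat.cast_nonneg t)
          split <;> norm_num
        · rw [← Finset.sum_div, Finset.sum_comm]
          simp only [Finset.sum_ite_eq, Finset.mem_univ, if_true]
          rw [Finset.sum_const, Finset.card_range, nsmul_eq_mul, mul_one,
            div_self (ne_of_gt htpos)]
      have hrow : ∀ i, (∑ j, M i j * q j) = (∑ s ∈ Finset.range t, M i (J ω s)) / t := by
        intro i
        calc (∑ j, M i j * q j)
            = (∑ j, ∑ s ∈ Finset.range t, if J ω s = j then M i j else 0) / t := by
              rw [Finset.sum_div]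
              refine Finset.sum_congr rfl fun j _ => ?_
              rw [hq]
              rw [mul_div_assoc']
              congr 1
              rw [Finset.mul_sum]
              simp [mul_ite]
        _ = (∑ s ∈ Finset.range t, M i (J ω s)) / t := by
              rw [Finset.sum_comm]
              simp [Finset.sum_ite_eq]
      have hgv := gameValue_le_row_sup M hM hqmem
      have h2' : (⨆ i, ∑ j, M i j * q j) ≤ (⨆ i, ∑ s ∈ Finset.range t, M i (J ω s)) / t := by
        refine ciSup_le fun i => ?_
        rw [hrow i]
        gcongr
        exact le_ciSup (f := fun i' => ∑ s ∈ Finset.range t, M i' (J ω s))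
          (Set.finite_range _).bddAbove i
      rw [← hv] at hgv
      have := hgv.trans h2'
      exact (le_div_iff₀ htpos).mp this
    -- combine
    have hXlow : v - c*ε - δ/2 ≤ X t / t := by
      rw [le_div_iff₀ htpos]
      have ht₀t : (t₀:ℝ) ≤ δ/2 * t := by
        rw [div_le_iff₀ htpos] at hsm
        linarith
      nlinarith [hXsup, hemp]
    have hgt : S t / (t:ℝ) = X t / t - (X t - S t) / t := by
      rw [sub_div]; ring
    rw [hgt]
    linarith
  · -- UPPER BOUND
    set T : ℕ → Fin n → ℝ := fun t j => ∑ s ∈ Finset.range t, vtil ω s (I ω s) j with hT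
    have hT_nonneg : ∀ t j, 0 ≤ T t j :=
      fun t j => Finset.sum_nonneg fun s _ => (hvtil ω s _ _).1
    -- rewrite the HC2 sequence
    have hE : ∀ t : ℕ,
        ((⨆ j, ∑ s ∈ Finset.range t, (1 - vtil ω s (I ω s) j)) -
          ∑ s ∈ Finset.range t, (1 - vtil ω s (I ω s) (J ω s))) / (t:ℝ)
        = (S t - ⨅ j, T t j) / t := by
      intro t
      congr 1
      have e1 : ∀ j, ∑ s ∈ Finset.range t, (1 - vtil ω s (I ω s) j) = (t:ℝ) - T t j := by
        intro j
        rw [Finset.sum_sub_distrib, Finset.sum_const, Finset.card_range, nsmul_eq_mul, mul_one]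
      have e2 : ∑ s ∈ Finset.range t, (1 - vtil ω s (I ω s) (J ω s)) = (t:ℝ) - S t := by
        rw [Finset.sum_sub_distrib, Finset.sum_const, Finset.card_range, nsmul_eq_mul, mul_one]
      simp only [e1, e2]
      rw [aux_ciSup_const_sub]
      ring
    rw [show (fun t : ℕ =>
        ((⨆ j, ∑ s ∈ Finset.range t, (1 - vtil ω s (I ω s) j)) -
          ∑ s ∈ Finset.range t, (1 - vtil ω s (I ω s) (J ω s))) / (t:ℝ))
        = fun t : ℕ => (S t - ⨅ j, T t j) / t from funext hE] at h2
    have hEbdd : IsBoundedUnder (· ≤ ·) atTop (fun t : ℕ => (S t - ⨅ j, T t j) / (t:ℝ)) := by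
      refine isBoundedUnder_of ⟨1, fun t => ?_⟩
      rcases Nat.eq_zero_or_pos t with h | h
      · simp [h]
      · have htpos : (0:ℝ) < t := by exact_mod_cast h
        rw [div_le_one htpos]
        have : (0:ℝ) ≤ ⨅ j, T t j := le_ciInf (hT_nonneg t)
        linarith [hS_le t]
    refine le_of_forall_pos_le_add fun δ hδ => ?_
    have hcb : IsBoundedUnder (· ≥ ·) atTop (fun t : ℕ => S t / (t:ℝ)) :=
      isBoundedUnder_of ⟨0, fun t => (hg01 t).1⟩
    refine limsup_le_of_le hcb.isCoboundedUnder_le ?_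
    have hD : ∀ᶠ t in atTop, (S t - ⨅ j, T t j) / (t:ℝ) < ε + δ/2 :=
      eventually_lt_of_limsup_lt (lt_of_le_of_lt h2 (by linarith)) hEbdd
    have hsmall : ∀ᶠ t : ℕ in atTop, (t₀:ℝ) / t ≤ δ/2 :=
      htend.eventually (eventually_le_nhds (by linarith))
    filter_upwards [hD, hsmall, eventually_ge_atTop t₀, eventually_ge_atTop 1]
      with t hDt hsm ht0 ht1
    have htpos : (0:ℝ) < t := by exact_mod_cast ht1
    -- distortion bound for each column
    have hdistT : ∀ j : Fin n,
        T t j ≤ (∑ s ∈ Finset.range t, M (I ω s) j) + (c*ε*t + t₀) := by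
      intro j
      have key : ∑ s ∈ Finset.range t, (vtil ω s (I ω s) j - M (I ω s) j) ≤ c*ε*t + t₀ := by
        rw [Finset.range_eq_Ico, ← Finset.sum_Ico_consecutive _ (Nat.zero_le t₀) ht0]
        have hA : ∑ s ∈ Finset.Ico 0 t₀, (vtil ω s (I ω s) j - M (I ω s) j) ≤ t₀ := by
          calc _ ≤ ∑ s ∈ Finset.Ico 0 t₀, (1:ℝ) := by
                refine Finset.sum_le_sum fun s _ => ?_
                have h1' := (hvtil ω s (I ω s) j).2
                have h2' := (hM (I ω s) j).1
                linarith
          _ = t₀ := by simp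
        have hB : ∑ s ∈ Finset.Ico t₀ t, (vtil ω s (I ω s) j - M (I ω s) j) ≤
            (Finset.Ico t₀ t).card • (c*ε) := by
          refine Finset.sum_le_card_nsmul _ _ _ fun s hs => ?_
          have habs := abs_le.mp (ht₀ s (Finset.mem_Ico.mp hs).1 (I ω s) j)
          linarith [habs.2]
        have hcard : ((Finset.Ico t₀ t).card : ℝ) ≤ t := by
          rw [Nat.card_Ico]
          exact_mod_cast Nat.sub_le t t₀
        rw [nsmul_eq_mul] at hB
        nlinarith [hcε]
      rw [Finset.sum_sub_distrib] at key
      simp only [hT]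
      linarith
    have hTinf : (⨅ j, T t j) ≤ (⨅ j, ∑ s ∈ Finset.range t, M (I ω s) j) + (c*ε*t + t₀) :=
      aux_ciInf_le_ciInf_add hdistT
    -- empirical upper bound via game value
    have hemp : (⨅ j, ∑ s ∈ Finset.range t, M (I ω s) j) ≤ v * t := by
      set p : Fin m → ℝ := fun i =>
        (∑ s ∈ Finset.range t, if I ω s = i then (1:ℝ) else 0) / t with hp
      have hpmem : p ∈ stdSimplex ℝ (Fin m) := by
        constructor
        · intro i
          refine div_nonneg (Finset.sum_nonneg fun s _ => ?_) (Nat.cast_nonneg t)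
          split <;> norm_num
        · rw [← Finset.sum_div, Finset.sum_comm]
          simp only [Finset.sum_ite_eq, Finset.mem_univ, if_true]
          rw [Finset.sum_const, Finset.card_range, nsmul_eq_mul, mul_one,
            div_self (ne_of_gt htpos)]
      have hcol : ∀ j, (∑ i, p i * M i j) = (∑ s ∈ Finset.range t, M (I ω s) j) / t := by
        intro j
        calc (∑ i, p i * M i j)
            = (∑ i, ∑ s ∈ Finset.range t, if I ω s = i then M i j else 0) / t := by
              rw [Finset.sum_div]
              refine Finset.sum_congr rfl fun i _ => ?_
              rw [hp, mul_comm, mul_div_assoc']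
              congr 1
              rw [Finset.mul_sum]
              simp [mul_ite]
        _ = (∑ s ∈ Finset.range t, M (I ω s) j) / t := by
              rw [Finset.sum_comm]
              simp [Finset.sum_ite_eq]
      have hgv := col_inf_le_gameValue M hM hpmem
      have h2' : (⨅ j, ∑ s ∈ Finset.range t, M (I ω s) j) / t ≤ ⨅ j, ∑ i, p i * M i j := by
        refine le_ciInf fun j => ?_
        rw [hcol j]
        gcongr
        exact ciInf_le (Set.finite_range _).bddBelow j
      rw [← hv] at hgv
      have := h2'.trans hgv
      exact (div_le_iff₀ htpos).mp this
    -- combine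
    have hTup : (⨅ j, T t j) / t ≤ v + c*ε + δ/2 := by
      rw [div_le_iff₀ htpos]
      have ht₀t : (t₀:ℝ) ≤ δ/2 * t := by
        rw [div_le_iff₀ htpos] at hsm
        linarith
      nlinarith [hTinf, hemp]
    have hgt : S t / (t:ℝ) = (S t - ⨅ j, T t j) / t + (⨅ j, T t j) / t := by
      rw [sub_div]; ring
    rw [hgt]
    linarith
end
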